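/- Let k, Λ, a be real numbers. Suppose f : ℝ → ℝ is twice differentiable, h : (0,π) → ℝ is twice differentiable, and for all r ∈ ℝ and all θ ∈ (0,π) one has f''(r) + (1/sin θ)·d/dθ(h'(θ)/sin θ) = −(k−4Λ)(r² + a²cos²θ). Then there exist real constants C₁, C₂, C₃, C₄, C₅ such that f(r) = −(1/12)(k−4Λ)r⁴ + (1/2)C₁r² + C₂r + C₃ for all r ∈ ℝ and h(θ) = −(1/12)(k−4Λ)a²cos⁴θ − (1/2)C₁cos²θ − C₄cosθ + C₅ for all θ ∈ (0,π). -/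

import Mathlib

open Real

lemma const_of_hasDerivAt_zero {s : Set ℝ} (hs : Convex ℝ s) {φ : ℝ → ℝ}
    (hφ : ∀ x ∈ s, HasDerivAt φ 0 x) {x y : ℝ} (hx : x ∈ s) (hy : y ∈ s) : φ x = φ y := by
  have := hs.norm_image_sub_le_of_norm_hasDerivWithin_le
    (f' := fun _ => (0:ℝ)) (C := 0) (fun z hz => (hφ z hz).hasDerivWithinAt)
    (fun z hz => by simp) hx hy
  rw [zero_mul] at this
  have : φ y - φ x = 0 := by
    have := norm_le_zero_iff.mp this
    simpa using this
  linarith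

/-- Classification: if twice differentiable `f : ℝ → ℝ` and `h` on `(0,π)` satisfy
`f''(r) + (1/sin θ)·d/dθ(h'(θ)/sin θ) = -(k-4Λ)(r² + a²cos²θ)` for all `r` and all
`θ ∈ (0,π)`, then `f` and `h` are the quartic polynomials (38) of the paper. -/
theorem stmt_3 (k Λ a : ℝ) (f h : ℝ → ℝ)
    (hf₁ : Differentiable ℝ f) (hf₂ : Differentiable ℝ (deriv f))
    (hh₁ : ∀ θ ∈ Set.Ioo (0 : ℝ) π, DifferentiableAt ℝ h θ)
    (hh₂ : ∀ θ ∈ Set.Ioo (0 : ℝ) π, DifferentiableAt ℝ (deriv h) θ)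
    (heq : ∀ r : ℝ, ∀ θ ∈ Set.Ioo (0 : ℝ) π,
      deriv (deriv f) r
        + (1 / Real.sin θ) * deriv (fun t : ℝ => deriv h t / Real.sin t) θ
      = -(k - 4*Λ) * (r^2 + a^2 * Real.cos θ^2)) :
    ∃ C₁ C₂ C₃ C₄ C₅ : ℝ,
      (∀ r : ℝ, f r = -(1/12) * (k - 4*Λ) * r^4 + (1/2) * C₁ * r^2 + C₂ * r + C₃) ∧
      (∀ θ ∈ Set.Ioo (0 : ℝ) π,
        h θ = -(1/12) * (k - 4*Λ) * a^2 * Real.cos θ^4 - (1/2) * C₁ * Real.cos θ^2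
          - C₄ * Real.cos θ + C₅) := by
  set c : ℝ := k - 4*Λ with hc
  have hmem : (π/2 : ℝ) ∈ Set.Ioo (0:ℝ) π := by
    constructor <;> [positivity; linarith [pi_pos]]
  -- Step A: f'' r = f'' 0 - c r²
  set C₁ : ℝ := deriv (deriv f) 0 with hC₁
  have hf'' : ∀ r : ℝ, deriv (deriv f) r = C₁ - c * r^2 := by
    intro r
    have h1 := heq r (π/2) hmem
    have h2 := heq 0 (π/2) hmem
    rw [Real.cos_pi_div_two] at h1 h2
    rw [hC₁]; nlinarith [h1, h2]
  -- Step B: deriv f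
  set C₂ : ℝ := deriv f 0 with hC₂
  have hf' : ∀ r : ℝ, deriv f r = -(c/3) * r^3 + C₁ * r + C₂ := by
    have key : ∀ x ∈ Set.univ,
        HasDerivAt (fun r => deriv f r - (-(c/3) * r^3 + C₁ * r + C₂)) 0 x := by
      intro x _
      have h1 : HasDerivAt (deriv f) (C₁ - c * x^2) x := by
        rw [← hf'' x]; exact (hf₂ x).hasDerivAt
      have h2 : HasDerivAt (fun r : ℝ => -(c/3) * r^3 + C₁ * r + C₂) (C₁ - c * x^2) x := by
        have := (((hasDerivAt_pow 3 x).const_mul (-(c/3))).add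
          ((hasDerivAt_id x).const_mul C₁)).add_const C₂
        exact this.congr_deriv (by push_cast; ring)
      exact (h1.sub h2).congr_deriv (by ring)
    intro r
    have := const_of_hasDerivAt_zero (convex_univ) key (Set.mem_univ r) (Set.mem_univ 0)
    simp only [hC₂] at this ⊢
    nlinarith [this]
  -- Step C: f
  set C₃ : ℝ := f 0 with hC₃
  have hfval : ∀ r : ℝ, f r = -(1/12) * c * r^4 + (1/2) * C₁ * r^2 + C₂ * r + C₃ := by
    have key : ∀ x ∈ Set.univ,
        HasDerivAt (fun r => f r - (-(1/12) * c * r^4 + (1/2) * C₁ * r^2 + C₂ * r + C₃)) 0 x := by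
      intro x _
      have h1 : HasDerivAt f (-(c/3) * x^3 + C₁ * x + C₂) x := by
        rw [← hf' x]; exact (hf₁ x).hasDerivAt
      have h2 : HasDerivAt (fun r : ℝ => -(1/12) * c * r^4 + (1/2) * C₁ * r^2 + C₂ * r + C₃)
          (-(c/3) * x^3 + C₁ * x + C₂) x := by
        have := ((((hasDerivAt_pow 4 x).const_mul (-(1/12) * c)).add
          ((hasDerivAt_pow 2 x).const_mul ((1/2) * C₁))).add
          ((hasDerivAt_id x).const_mul C₂)).add_const C₃
        exact this.congr_deriv (by push_cast; ring)
      exact (h1.sub h2).congr_deriv (by ring)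
    intro r
    have := const_of_hasDerivAt_zero (convex_univ) key (Set.mem_univ r) (Set.mem_univ 0)
    simp only [hC₃] at this ⊢
    nlinarith [this]
  -- Step D: angular equation
  have hsin : ∀ θ ∈ Set.Ioo (0:ℝ) π, Real.sin θ ≠ 0 := fun θ hθ =>
    ne_of_gt (Real.sin_pos_of_pos_of_lt_pi hθ.1 hθ.2)
  set u : ℝ → ℝ := fun t => deriv h t / Real.sin t with hu
  have hudiff : ∀ θ ∈ Set.Ioo (0:ℝ) π, DifferentiableAt ℝ u θ := fun θ hθ =>
    (hh₂ θ hθ).div (Real.differentiable_sin θ) (hsin θ hθ)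
  have hderivu : ∀ θ ∈ Set.Ioo (0:ℝ) π,
      deriv u θ = Real.sin θ * (-c * a^2 * Real.cos θ^2 - C₁) := by
    intro θ hθ
    have h1 := heq 0 θ hθ
    rw [hf'' 0] at h1
    have hs := hsin θ hθ
    field_simp at h1 ⊢
    nlinarith [h1]
  set C₄ : ℝ := u (π/2) with hC₄
  set U : ℝ → ℝ := fun t => (c * a^2/3) * Real.cos t^3 + C₁ * Real.cos t with hU
  have hUder : ∀ θ : ℝ, HasDerivAt U (Real.sin θ * (-c * a^2 * Real.cos θ^2 - C₁)) θ := by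
    intro θ
    have := (((Real.hasDerivAt_cos θ).pow 3).const_mul (c * a^2/3)).add
      ((Real.hasDerivAt_cos θ).const_mul C₁)
    exact this.congr_deriv (by push_cast; ring)
  have hueq : ∀ θ ∈ Set.Ioo (0:ℝ) π, u θ = U θ + C₄ := by
    have key : ∀ x ∈ Set.Ioo (0:ℝ) π, HasDerivAt (fun t => u t - U t) 0 x := by
      intro x hx
      have h1 : HasDerivAt u (Real.sin x * (-c * a^2 * Real.cos x^2 - C₁)) x := by
        rw [← hderivu x hx]; exact (hudiff x hx).hasDerivAt
      exact (h1.sub (hUder x)).congr_deriv (by ring)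
    intro θ hθ
    have := const_of_hasDerivAt_zero (convex_Ioo 0 π) key hθ hmem
    have hU2 : U (π/2) = 0 := by simp [hU]
    rw [hU2, sub_zero, ← hC₄] at this; linarith [this]
  have hderivh : ∀ θ ∈ Set.Ioo (0:ℝ) π,
      deriv h θ = Real.sin θ * (U θ + C₄) := by
    intro θ hθ
    have := hueq θ hθ
    rw [hu] at this
    simp only at this
    rw [div_eq_iff (hsin θ hθ)] at this
    rw [this]; ring
  -- Step E: h
  set C₅ : ℝ := h (π/2) with hC₅
  set H : ℝ → ℝ := fun t => -(1/12) * c * a^2 * Real.cos t^4 - (1/2) * C₁ * Real.cos t^2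
    - C₄ * Real.cos t with hH
  have hHder : ∀ θ : ℝ, HasDerivAt H (Real.sin θ * (U θ + C₄)) θ := by
    intro θ
    have := ((((Real.hasDerivAt_cos θ).pow 4).const_mul (-(1/12) * c * a^2)).sub
      (((Real.hasDerivAt_cos θ).pow 2).const_mul ((1/2) * C₁))).sub
      ((Real.hasDerivAt_cos θ).const_mul C₄)
    exact this.congr_deriv (by simp only [hU]; push_cast; ring)
  refine ⟨C₁, C₂, C₃, C₄, C₅, hfval, ?_⟩
  have key : ∀ x ∈ Set.Ioo (0:ℝ) π, HasDerivAt (fun t => h t - H t) 0 x := by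
    intro x hx
    have h1 : HasDerivAt h (Real.sin x * (U x + C₄)) x := by
      rw [← hderivh x hx]; exact (hh₁ x hx).hasDerivAt
    exact (h1.sub (hHder x)).congr_deriv (by ring)
  intro θ hθ
  have := const_of_hasDerivAt_zero (convex_Ioo 0 π) key hθ hmem
  have hH2 : H (π/2) = 0 := by simp [hH]
  rw [hH2, sub_zero, ← hC₅] at this
  have : h θ = H θ + C₅ := by linarith [this]
  rw [this, hH]
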